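/- The function f(x) = sin(x)·(1 - 1/(8·sin³(x/2))) has a unique critical point θ_c in (0, π); moreover θ_c > 3π/5, f'(x) > 0 on (0, θ_c), and f'(x) < 0 on (θ_c, π). -/

import Mathlib

open Real Set

noncomputable def f (x : ℝ) : ℝ := Real.sin x * (1 - 1 / (8 * Real.sin (x/2)^3))

noncomputable def g (x : ℝ) : ℝ :=
  Real.cos x + (3 + Real.cos x) / (16 * Real.sin (x/2)^3)

lemma hasDerivAt_f {x : ℝ} (hs : Real.sin (x/2) ≠ 0) : HasDerivAt f (g x) x := by
  have h8 : (8:ℝ) * Real.sin (x/2)^3 ≠ 0 := by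
    exact mul_ne_zero (by norm_num) (pow_ne_zero _ hs)
  have hx2 : HasDerivAt (fun y : ℝ => y/2) (1/2) x := (hasDerivAt_id x).div_const 2
  have h1 : HasDerivAt (fun y => Real.sin (y/2)) (Real.cos (x/2) * (1/2)) x :=
    by exact (Real.hasDerivAt_sin (x/2)).comp x hx2
  have h2 := h1.pow 3
  have h3 := (h2.const_mul (8:ℝ)).inv h8
  have h5 := ((hasDerivAt_const x (1:ℝ)).sub h3)
  have h6 : HasDerivAt (fun y => Real.sin y * (1 - (8 * Real.sin (y/2)^3)⁻¹)) _ x :=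
    (Real.hasDerivAt_sin x).mul h5
  have hf : f = fun y => Real.sin y * (1 - (8 * Real.sin (y/2)^3)⁻¹) := by
    funext y; simp [f, one_div]
  rw [hf]
  convert h6 using 1
  have hsin : Real.sin x = 2 * Real.sin (x/2) * Real.cos (x/2) := by
    rw [← Real.sin_two_mul]; ring_nf
  have hcos : Real.cos x = 2 * Real.cos (x/2)^2 - 1 := by
    rw [← Real.cos_two_mul]; ring_nf
  unfold g; rw [hsin, hcos]; simp only [Pi.pow_apply]
  field_simp
  ring

lemma sin_half_pos {x : ℝ} (h0 : 0 < x) (h1 : x ≤ π) : 0 < Real.sin (x/2) :=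
  Real.sin_pos_of_pos_of_lt_pi (by linarith) (by linarith [Real.pi_pos])

lemma g_anti {x y : ℝ} (h0 : 0 < x) (hxy : x < y) (h1 : y ≤ π) : g y < g x := by
  have hsx := sin_half_pos h0 (by linarith)
  have hsy := sin_half_pos (by linarith) h1
  have hss : Real.sin (x/2) < Real.sin (y/2) := by
    apply Real.strictMonoOn_sin ⟨by linarith [Real.pi_pos], by linarith⟩
      ⟨by linarith [Real.pi_pos], by linarith⟩ (by linarith)
  have hcc : Real.cos y < Real.cos x := by
    apply Real.strictAntiOn_cos ⟨by linarith, by linarith⟩ ⟨by linarith, h1⟩ hxy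
  have hcb : -1 ≤ Real.cos y := Real.neg_one_le_cos y
  have hp : Real.sin (x/2)^3 < Real.sin (y/2)^3 := by
    exact pow_lt_pow_left₀ hss hsx.le (by norm_num)
  have hd : (3 + Real.cos y) / (16 * Real.sin (y/2)^3)
      < (3 + Real.cos x) / (16 * Real.sin (x/2)^3) := by
    rw [div_lt_div_iff₀ (by positivity) (by positivity)]
    have key : (3 + Real.cos y) * Real.sin (x/2)^3 < (3 + Real.cos x) * Real.sin (y/2)^3 :=
      mul_lt_mul' (by linarith) hp (by positivity) (by linarith)
    nlinarith [key]
  unfold g; linarith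

lemma g_at_pi : g π = -7/8 := by
  simp [g, Real.sin_pi_div_two]
  norm_num

lemma g_at : g (3*π/5) = (13 * Real.sqrt 5 - 29) / 8 := by
  have h1 : Real.cos (3*π/5) = -(2 * ((1 + Real.sqrt 5)/4)^2 - 1) := by
    have : (3:ℝ)*π/5 = π - 2*(π/5) := by ring
    rw [this, Real.cos_pi_sub, Real.cos_two_mul, Real.cos_pi_div_five]
  have h2 : Real.sin (3*π/5/2) = (1 + Real.sqrt 5)/4 := by
    have : (3:ℝ)*π/5/2 = π/2 - π/5 := by ring
    rw [this, Real.sin_pi_div_two_sub, Real.cos_pi_div_five]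
  have h5 : Real.sqrt 5 ^ 2 = 5 := Real.sq_sqrt (by norm_num)
  have h5' : (2:ℝ) < Real.sqrt 5 := by nlinarith [Real.sqrt_nonneg 5]
  have hcube : ((1 + Real.sqrt 5)/4)^3 = (16 + 8*Real.sqrt 5)/64 := by
    rw [div_pow]
    have : (1 + Real.sqrt 5)^3 = 16 + 8*Real.sqrt 5 := by
      linear_combination (Real.sqrt 5 + 3) * h5
    rw [this]; norm_num
  rw [g, h1, h2, hcube]
  have hne : (16:ℝ) + 8*Real.sqrt 5 ≠ 0 := by positivity
  field_simp
  nlinarith [h5, h5']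

lemma g_pos : 0 < g (3*π/5) := by
  rw [g_at]
  have h5 : Real.sqrt 5 ^ 2 = 5 := Real.sq_sqrt (by norm_num)
  nlinarith [Real.sqrt_nonneg 5]

lemma g_cont : ContinuousOn g (Icc (3*π/5) π) := by
  apply ContinuousOn.add Real.continuous_cos.continuousOn
  apply ContinuousOn.div (by fun_prop) (by fun_prop)
  intro x hx
  have hπ := Real.pi_pos
  have : 0 < Real.sin (x/2) := sin_half_pos (by linarith [hx.1]) hx.2
  positivity

theorem stmt5 : ∃ θc ∈ Ioo (0:ℝ) π,
    deriv f θc = 0 ∧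
    (∀ x ∈ Ioo (0:ℝ) π, deriv f x = 0 → x = θc) ∧
    θc > 3*π/5 ∧
    (∀ x ∈ Ioo (0:ℝ) θc, deriv f x > 0) ∧
    (∀ x ∈ Ioo θc π, deriv f x < 0) := by
  have hπ := Real.pi_pos
  have hlt : (3:ℝ)*π/5 < π := by linarith
  have hivt := intermediate_value_Ioo' (le_of_lt hlt) g_cont
  have h0mem : (0:ℝ) ∈ Ioo (g π) (g (3*π/5)) := by
    rw [g_at_pi]; exact ⟨by norm_num, g_pos⟩
  obtain ⟨θc, hθmem, hθ0⟩ := hivt h0mem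
  have hθ1 : 0 < θc := by linarith [hθmem.1]
  have hθπ : θc < π := hθmem.2
  have hderiv : ∀ x : ℝ, 0 < x → x < π → deriv f x = g x := by
    intro x hx0 hxπ
    exact (hasDerivAt_f (ne_of_gt (sin_half_pos hx0 (le_of_lt hxπ)))).deriv
  refine ⟨θc, ⟨hθ1, hθπ⟩, ?_, ?_, hθmem.1, ?_, ?_⟩
  · rw [hderiv θc hθ1 hθπ]; exact hθ0
  · intro x hx hdx
    rw [hderiv x hx.1 hx.2] at hdx
    rcases lt_trichotomy x θc with h | h | h
    · have := g_anti hx.1 h (le_of_lt hθπ); rw [hθ0, hdx] at this; linarith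
    · exact h
    · have := g_anti hθ1 h (le_of_lt hx.2); rw [hθ0, hdx] at this; linarith
  · intro x hx
    rw [hderiv x hx.1 (by linarith [hx.2])]
    have := g_anti hx.1 hx.2 (le_of_lt hθπ)
    rw [hθ0] at this; linarith
  · intro x hx
    rw [hderiv x (by linarith [hx.1]) hx.2]
    have := g_anti hθ1 hx.1 (le_of_lt hx.2)
    rw [hθ0] at this; linarith
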